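/- arXiv:2605.13085 — 3 statements merged into one kernel-verified Lean document; each statement's English description precedes it below -/
import Mathlib

section
/- Consider the maps $f_1(x)=2x$, $f_2(x)=4x$ on $\mathbb{R}$. The sets $K_1=\{2^n : n\in\mathbb{Z}\}$ and $K_2=\{0\}\cup K_1$ both satisfy $K=f_1(K)\cup f_2(K)$, yet neither $K_1$ nor $K_2$ can be written as a finite union of forward orbits $\fo_\F(a_1)\cup\cdots\cup\fo_\F(a_N)$ with $a_k\in K$. -/
/-- The forward orbit of `a` under a family of maps. -/
def forwardOrbit {X ι : Type*} (f : ι → X → X) (a : X) : Set X :=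
  {x | ∃ w : List ι, w ≠ [] ∧ x = w.foldr (fun i y => f i y) a}

noncomputable def f5 : Fin 2 → ℝ → ℝ := ![fun x => 2 * x, fun x => 4 * x]

def K1 : Set ℝ := {x | ∃ n : ℤ, x = (2 : ℝ) ^ n}

def K2 : Set ℝ := {0} ∪ K1

lemma foldr_eq5 (w : List (Fin 2)) (a : ℝ) :
    w.foldr (fun i y => f5 i y) a = 2 ^ (w.map (fun i => i.val + 1)).sum * a := by
  induction w with
  | nil => simp
  | cons i w ih =>
    simp only [List.foldr_cons, ih, List.map_cons, List.sum_cons, pow_add]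
    fin_cases i <;> simp [f5] <;> ring

lemma mem_orbit5 (a x : ℝ) :
    x ∈ forwardOrbit f5 a ↔ ∃ m : ℕ, 1 ≤ m ∧ x = 2 ^ m * a := by
  constructor
  · rintro ⟨w, hw, rfl⟩
    refine ⟨(w.map fun i => i.val + 1).sum, ?_, foldr_eq5 w a⟩
    cases w with
    | nil => exact absurd rfl hw
    | cons i w => simp only [List.map_cons, List.sum_cons]; omega
  · rintro ⟨m, hm, rfl⟩
    refine ⟨List.replicate m 0, ?_, ?_⟩
    · intro h
      rw [List.replicate_eq_nil_iff] at h
      omega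
    · rw [foldr_eq5, List.map_replicate, List.sum_replicate, smul_eq_mul]
      norm_num

lemma main5 (K : Set ℝ) (hK1 : K1 ⊆ K) (hK2 : K ⊆ K2) :
    ¬ ∃ (N : ℕ) (a : Fin N → ℝ), (∀ k, a k ∈ K) ∧
      K = ⋃ k : Fin N, forwardOrbit f5 (a k) := by
  rintro ⟨N, a, ha, hU⟩
  have hg : ∀ k, ∃ n : ℤ, a k = 0 ∨ a k = 2 ^ n := by
    intro k
    rcases hK2 (ha k) with h | ⟨n, hn⟩
    · exact ⟨0, Or.inl h⟩
    · exact ⟨n, Or.inr hn⟩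
  choose g hgspec using hg
  obtain ⟨M, hM⟩ : ∃ M : ℤ, ∀ k, M ≤ g k := Finite.exists_ge g
  have hmem : (2 : ℝ) ^ (M - 1) ∈ K := hK1 ⟨M - 1, rfl⟩
  rw [hU, Set.mem_iUnion] at hmem
  obtain ⟨k, hk⟩ := hmem
  rw [mem_orbit5] at hk
  obtain ⟨m, hm1, hm2⟩ := hk
  rcases hgspec k with h0 | hpow
  · rw [h0, mul_zero] at hm2
    exact absurd hm2 (ne_of_gt (zpow_pos (by norm_num) _))
  · rw [hpow, ← zpow_natCast (2:ℝ) m, ← zpow_add₀ (by norm_num : (2:ℝ) ≠ 0)] at hm2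
    have := zpow_right_injective₀ (by norm_num : (0:ℝ) < 2) (by norm_num) hm2
    have hMk := hM k
    omega

theorem stmt5 :
    (K1 = f5 0 '' K1 ∪ f5 1 '' K1) ∧ (K2 = f5 0 '' K2 ∪ f5 1 '' K2) ∧
      (∀ K ∈ ({K1, K2} : Set (Set ℝ)),
        ¬ ∃ (N : ℕ) (a : Fin N → ℝ), (∀ k, a k ∈ K) ∧
          K = ⋃ k : Fin N, forwardOrbit f5 (a k)) := by
  have hf0 : ∀ x : ℝ, f5 0 x = 2 * x := fun x => rfl
  have hf1 : ∀ x : ℝ, f5 1 x = 4 * x := fun x => rfl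
  have h2 : (2 : ℝ) ≠ 0 := by norm_num
  have key : ∀ n : ℤ, (2 : ℝ) ^ n = f5 0 ((2:ℝ) ^ (n - 1)) := by
    intro n
    rw [hf0, mul_comm, ← zpow_add_one₀ h2, sub_add_cancel]
  refine ⟨?_, ?_, ?_⟩
  · ext x
    constructor
    · rintro ⟨n, rfl⟩
      exact Or.inl ⟨2 ^ (n - 1), ⟨n - 1, rfl⟩, (key n).symm⟩
    · rintro (⟨y, ⟨n, rfl⟩, rfl⟩ | ⟨y, ⟨n, rfl⟩, rfl⟩)
      · exact ⟨n + 1, by rw [hf0, zpow_add_one₀ h2]; ring⟩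
      · exact ⟨n + 2, by rw [hf1, zpow_add₀ h2]; norm_num; ring⟩
  · ext x
    constructor
    · rintro (rfl | ⟨n, rfl⟩)
      · exact Or.inl ⟨0, Or.inl rfl, by rw [hf0, mul_zero]⟩
      · exact Or.inl ⟨2 ^ (n - 1), Or.inr ⟨n - 1, rfl⟩, (key n).symm⟩
    · rintro (⟨y, (rfl | ⟨n, rfl⟩), rfl⟩ | ⟨y, (rfl | ⟨n, rfl⟩), rfl⟩)
      · exact Or.inl (by rw [hf0, mul_zero]; exact rfl)
      · exact Or.inr ⟨n + 1, by rw [hf0, zpow_add_one₀ h2]; ring⟩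
      · exact Or.inl (by rw [hf1, mul_zero]; exact rfl)
      · exact Or.inr ⟨n + 2, by rw [hf1, zpow_add₀ h2]; norm_num; ring⟩
  · rintro K (rfl | rfl)
    · exact main5 K1 subset_rfl Set.subset_union_right
    · exact main5 K2 Set.subset_union_right subset_rfl
end

section
/- Let $r\in\mathbb{Z}$ with $|r|>1$, let $b_1,\dots,b_m\in\mathbb{Z}$ satisfy $b_i\not\equiv b_j \pmod{r}$ for all $i\neq j$, and let $f_i(x)=rx+b_i$. Then for every $a\in\mathbb{Q}$ and all $i\neq j$, the set $f_i(\fo_\F(a)) \cap f_j(\fo_\F(a))$ is finite. -/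
/-- Integer part coefficient of an orbit point. -/
def cInt {m : ℕ} (r : ℤ) (b : Fin m → ℤ) : List (Fin m) → ℤ
  | [] => 0
  | i :: w => r * cInt r b w + b i

lemma foldr_eq {m : ℕ} (r : ℤ) (b : Fin m → ℤ) (a : ℚ) (w : List (Fin m)) :
    (w.foldr (fun i y => (r : ℝ) * y + (b i : ℝ)) (a : ℝ))
      = (r : ℝ) ^ w.length * (a : ℝ) + ((cInt r b w : ℤ) : ℝ) := by
  induction w with
  | nil => simp [cInt]
  | cons i w ih =>
      simp only [List.foldr_cons, ih, cInt, List.length_cons]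
      push_cast
      ring

lemma decomp : ∀ q : ℕ, q ≠ 0 → ∀ R : ℕ, R ≠ 0 →
    ∃ u s : ℕ, q = u * s ∧ u ∣ R ^ q ∧ Nat.Coprime s R := by
  intro q
  induction q using Nat.strong_induction_on with
  | _ q ih =>
    intro hq R hR
    by_cases h1 : Nat.Coprime q R
    · exact ⟨1, q, (one_mul q).symm, one_dvd _, h1⟩
    · set G := Nat.gcd q R with hG
      have hGq : G ∣ q := Nat.gcd_dvd_left q R
      have hG0 : G ≠ 0 := fun h => hq (Nat.eq_zero_of_gcd_eq_zero_left h)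
      have hG1 : 1 < G := by
        rcases Nat.lt_or_ge G 2 with h | h
        · interval_cases G
          · exact absurd rfl hG0
          · exact absurd hG.symm h1
        · omega
      set q' := q / G with hq'
      have hq'mul : G * q' = q := Nat.mul_div_cancel' hGq
      have hq'0 : q' ≠ 0 := by
        intro h; rw [h, mul_zero] at hq'mul; exact hq hq'mul.symm
      have hlt : q' < q := Nat.div_lt_self (Nat.pos_of_ne_zero hq) hG1
      obtain ⟨u, s, h1', h2', h3'⟩ := ih q' hlt hq'0 R hR
      refine ⟨G * u, s, ?_, ?_, h3'⟩
      · rw [mul_assoc, ← h1', hq'mul]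
      · have : G * u ∣ R * R ^ q' :=
          mul_dvd_mul (Nat.gcd_dvd_right q R) h2'
        refine this.trans ?_
        rw [← pow_succ']
        exact pow_dvd_pow R (by omega)

lemma key (r : ℤ) (hr : 1 < |r|) (a : ℚ) {N M : ℕ} (hNM : M < N)
    (hM : a.den + 1 ≤ M) (c d : ℤ)
    (h : (r : ℝ) ^ N * (a : ℝ) + (c : ℝ) = (r : ℝ) ^ M * (a : ℝ) + (d : ℝ)) :
    r ∣ d - c := by
  have hr0 : r ≠ 0 := by
    intro h; rw [h] at hr; simp at hr
  have hQ : (r : ℚ) ^ N * a + (c : ℚ) = (r : ℚ) ^ M * a + (d : ℚ) := by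
    exact_mod_cast h
  have hden : ((a.den : ℤ) : ℚ) ≠ 0 := by
    exact_mod_cast a.den_ne_zero
  have hZ : (r ^ N - r ^ M) * a.num = (d - c) * (a.den : ℤ) := by
    have h2 : ((r ^ N - r ^ M : ℤ) : ℚ) * a = ((d - c : ℤ) : ℚ) := by
      push_cast
      linarith [hQ]
    rw [← Rat.num_div_den a] at h2
    field_simp at h2
    rw [mul_comm (d - c)]; exact_mod_cast h2
  obtain ⟨u, s, hqus, hu, hs⟩ := decomp a.den a.den_ne_zero r.natAbs
    (by simpa using hr0)
  have huz : (u : ℤ) ∣ r ^ (M - 1) := by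
    have h1 : (u : ℤ) ∣ ((r.natAbs : ℤ)) ^ a.den := by
      exact_mod_cast Int.natCast_dvd_natCast.mpr hu
    have h2 : ((r.natAbs : ℤ)) ^ a.den ∣ ((r.natAbs : ℤ)) ^ (M - 1) :=
      pow_dvd_pow _ (by omega)
    have h3 : ((r.natAbs : ℤ)) ^ (M - 1) ∣ r ^ (M - 1) := by
      have := Int.natAbs_dvd.mpr (dvd_refl (r ^ (M - 1)))
      simpa [Int.natAbs_pow] using this
    exact (h1.trans h2).trans h3
  obtain ⟨w, hw⟩ := huz
  have e1 : (r : ℤ) ^ N - r ^ M = r * r ^ (M - 1) * (r ^ (N - M) - 1) := by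
    have hM1 : M - 1 + 1 = M := by omega
    have hNM' : M + (N - M) = N := by omega
    calc (r : ℤ) ^ N - r ^ M = r ^ M * r ^ (N - M) - r ^ M := by
          rw [← pow_add, hNM']
      _ = (r ^ (M - 1) * r) * r ^ (N - M) - r ^ (M - 1) * r := by
          rw [← pow_succ, hM1]
      _ = r * r ^ (M - 1) * (r ^ (N - M) - 1) := by ring
  have e2 : ((a.den : ℤ)) = (u : ℤ) * (s : ℤ) := by exact_mod_cast hqus
  have hu0 : (u : ℤ) ≠ 0 := by
    have : u ≠ 0 := by
      intro h; rw [h, zero_mul] at hqus; exact a.den_ne_zero hqus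
    exact_mod_cast this
  have key2 : (u : ℤ) * ((d - c) * s) =
      (u : ℤ) * (r * (w * ((r ^ (N - M) - 1) * a.num))) := by
    rw [e1, hw] at hZ
    rw [e2] at hZ
    linarith [hZ]
  have hcancel : (d - c) * (s : ℤ) = r * (w * ((r ^ (N - M) - 1) * a.num)) :=
    mul_left_cancel₀ hu0 key2
  have hdvd : r ∣ (d - c) * (s : ℤ) := ⟨_, hcancel⟩
  have hco : IsCoprime (r : ℤ) ((s : ℕ) : ℤ) := by
    rw [Int.isCoprime_iff_gcd_eq_one]
    simpa [Int.gcd, Nat.coprime_comm] using hs.symm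
  exact hco.dvd_of_dvd_mul_right hdvd

theorem stmt7 {m : ℕ} (r : ℤ) (hr : 1 < |r|) (b : Fin m → ℤ)
    (hb : ∀ i j : Fin m, i ≠ j → ¬ r ∣ (b i - b j))
    (a : ℚ) (i j : Fin m) (hij : i ≠ j) :
    Set.Finite
      ((fun x : ℝ => (r : ℝ) * x + (b i : ℝ)) ''
          forwardOrbit (fun k : Fin m => fun x : ℝ => (r : ℝ) * x + (b k : ℝ)) (a : ℝ) ∩
        (fun x : ℝ => (r : ℝ) * x + (b j : ℝ)) ''
          forwardOrbit (fun k : Fin m => fun x : ℝ => (r : ℝ) * x + (b k : ℝ)) (a : ℝ)) := by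
  apply Set.Finite.subset
    ((List.finite_length_le (Fin m) a.den).image
      (fun V : List (Fin m) => (r : ℝ) ^ V.length * (a : ℝ) + ((cInt r b V : ℤ) : ℝ)))
  rintro v ⟨⟨x, ⟨w, hw0, rfl⟩, rfl⟩, ⟨y, ⟨u, hu0, rfl⟩, hvy⟩⟩
  simp only at hvy ⊢
  set cW := cInt r b (i :: w) with hcWdef
  set cU := cInt r b (j :: u) with hcUdef
  have hW : (r : ℝ) * (w.foldr (fun k y => (r : ℝ) * y + (b k : ℝ)) (a : ℝ)) + (b i : ℝ)
      = (r : ℝ) ^ (w.length + 1) * (a : ℝ) + (cW : ℝ) := by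
    simpa using foldr_eq r b a (i :: w)
  have hU : (r : ℝ) * (u.foldr (fun k y => (r : ℝ) * y + (b k : ℝ)) (a : ℝ)) + (b j : ℝ)
      = (r : ℝ) ^ (u.length + 1) * (a : ℝ) + (cU : ℝ) := by
    simpa using foldr_eq r b a (j :: u)
  obtain ⟨pw, hpw⟩ : r ∣ cW - b i := ⟨cInt r b w, by simp [hcWdef, cInt]⟩
  obtain ⟨pu, hpu⟩ : r ∣ cU - b j := ⟨cInt r b u, by simp [hcUdef, cInt]⟩
  set N := w.length + 1 with hN
  set M := u.length + 1 with hM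
  have hEq : (r : ℝ) ^ M * (a : ℝ) + (cU : ℝ) = (r : ℝ) ^ N * (a : ℝ) + (cW : ℝ) := by
    rw [← hU, ← hW]; exact hvy
  rcases lt_trichotomy N M with hlt | heq | hgt
  · by_cases hden : N ≤ a.den
    · exact ⟨i :: w, by simp; omega, hW.symm⟩
    · exfalso
      obtain ⟨px, hpx⟩ := key r hr a hlt (by omega) cU cW hEq
      exact hb i j hij ⟨pu - pw + px, by linarith⟩
  · exfalso
    have hcc : (cU : ℝ) = (cW : ℝ) := by
      rw [heq] at hEq; linarith
    have hcc' : cU = cW := by exact_mod_cast hcc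
    exact hb i j hij ⟨pu - pw, by linarith⟩
  · by_cases hden : M ≤ a.den
    · exact ⟨j :: u, by simp; omega, hU.symm.trans hvy⟩
    · exfalso
      obtain ⟨px, hpx⟩ := key r hr a hgt (by omega) cW cU hEq.symm
      exact hb i j hij ⟨pu - pw - px, by linarith⟩
end

section
/- Let $\F=\{f_i(x)=r_ix+b_i\}_{i=1}^m$ with all $|r_i|>1$ sharing a common fixed point $x_0$. Then for every $a\in\mathbb{R}$, the lower and upper mass dimensions of $\fo_\F(a)$ are both $0$; that is, $\lim_{h\to\infty}\frac{\log\#(\fo_\F(a)\cap[-h,h])}{\log h}=0$. -/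
lemma orbit_form {m : ℕ} (r b : Fin m → ℝ) (x0 : ℝ) (hfix : ∀ i, r i * x0 + b i = x0) (a : ℝ) :
    ∀ w : List (Fin m), w.foldr (fun i y => r i * y + b i) a = (w.map r).prod * (a - x0) + x0 := by
  intro w
  induction w with
  | nil => simp
  | cons i w ih =>
    simp only [List.foldr_cons, ih, List.map_cons, List.prod_cons]
    linear_combination hfix i

lemma prod_count {m : ℕ} (r : Fin m → ℝ) (w : List (Fin m)) :
    (w.map r).prod = ∏ i : Fin m, r i ^ (w.count i) := by
  rw [Finset.prod_list_map_count w r]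
  refine Finset.prod_subset (Finset.subset_univ _) ?_
  intro i _ hi
  rw [List.count_eq_zero_of_not_mem (fun h => hi (List.mem_toFinset.2 h)), pow_zero]

lemma abs_prod_ge {m : ℕ} (r : Fin m → ℝ) (c : ℝ) (hc : 1 ≤ c) (hcr : ∀ i, c ≤ |r i|) :
    ∀ w : List (Fin m), c ^ w.length ≤ |(w.map r).prod| := by
  intro w
  induction w with
  | nil => simp
  | cons i w ih =>
    simp only [List.map_cons, List.prod_cons, List.length_cons, abs_mul, pow_succ]
    rw [mul_comm (c ^ w.length) c]
    exact mul_le_mul (hcr i) ih (by positivity) (abs_nonneg _)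

lemma stmt10_card_le {m : ℕ} (r b : Fin m → ℝ) (x0 a : ℝ)
    (hfix : ∀ i, r i * x0 + b i = x0) (h : ℝ) (L : ℕ)
    (hL : ∀ w : List (Fin m),
      w.foldr (fun i y => r i * y + b i) a ∈ Set.Icc (-h) h → w.length ≤ L) :
    Set.ncard (forwardOrbit (fun i : Fin m => fun x : ℝ => r i * x + b i) a ∩ Set.Icc (-h) h)
      ≤ (L + 1) ^ m := by
  classical
  set T : Finset ℝ := Finset.image
    (fun k : Fin m → Fin (L + 1) => (∏ i, r i ^ (k i : ℕ)) * (a - x0) + x0) Finset.univ with hT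
  have hsub : forwardOrbit (fun i : Fin m => fun x : ℝ => r i * x + b i) a ∩ Set.Icc (-h) h
      ⊆ ↑T := by
    rintro x ⟨⟨w, hw, rfl⟩, hx⟩
    have hlen := hL w hx
    refine Finset.mem_coe.2 (Finset.mem_image.2
      ⟨fun i => ⟨w.count i, lt_of_le_of_lt (le_trans List.count_le_length hlen)
        (Nat.lt_succ_self L)⟩, Finset.mem_univ _, ?_⟩)
    rw [orbit_form r b x0 hfix a w, prod_count r w]
  calc Set.ncard (forwardOrbit (fun i : Fin m => fun x : ℝ => r i * x + b i) a ∩ Set.Icc (-h) h)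
      ≤ T.card := by
        rw [← Set.ncard_coe_finset]
        exact Set.ncard_le_ncard hsub T.finite_toSet
    _ ≤ Fintype.card (Fin m → Fin (L + 1)) := by
        rw [hT]
        exact le_trans (Finset.card_image_le) (le_of_eq (Finset.card_univ))
    _ = (L + 1) ^ m := by simp [Fintype.card_fun]

lemma log_nat_mono {p q : ℕ} (hpq : p ≤ q) : Real.log p ≤ Real.log q := by
  rcases Nat.eq_zero_or_pos p with hp | hp
  · subst hp
    simp only [Nat.cast_zero, Real.log_zero]
    rcases Nat.eq_zero_or_pos q with hq | hq
    · simp [hq]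
    · exact Real.log_nonneg (by exact_mod_cast hq)
  · exact Real.log_le_log (by exact_mod_cast hp) (by exact_mod_cast hpq)

lemma log_nat_nonneg (p : ℕ) : 0 ≤ Real.log p := by
  simpa using log_nat_mono (Nat.zero_le p)

theorem stmt10 {m : ℕ} (r b : Fin m → ℝ) (hr : ∀ i, 1 < |r i|) (x0 : ℝ)
    (hfix : ∀ i, r i * x0 + b i = x0) (a : ℝ) :
    Filter.Tendsto
      (fun h : ℝ =>
        Real.log
            (Set.ncard (forwardOrbit (fun i : Fin m => fun x : ℝ => r i * x + b i) a ∩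
              Set.Icc (-h) h)) / Real.log h)
      Filter.atTop (nhds 0) := by
  rcases Nat.eq_zero_or_pos m with hm | hm
  · subst hm
    have he : ∀ h : ℝ,
        forwardOrbit (fun i : Fin 0 => fun x : ℝ => r i * x + b i) a ∩ Set.Icc (-h) h = ∅ := by
      intro h
      ext x
      simp only [Set.mem_inter_iff, Set.mem_empty_iff_false, iff_false, not_and]
      rintro ⟨w, hw, _⟩
      cases w with
      | nil => exact absurd rfl hw
      | cons i _ => exact i.elim0
    simp only [he, Set.ncard_empty, Nat.cast_zero, Real.log_zero, zero_div]
    exact tendsto_const_nhds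
  by_cases ha : a = x0
  · subst ha
    have key : ∀ h : ℝ,
        Real.log (Set.ncard (forwardOrbit (fun i : Fin m => fun x : ℝ => r i * x + b i) a ∩
          Set.Icc (-h) h)) = 0 := by
      intro h
      have hsub : forwardOrbit (fun i : Fin m => fun x : ℝ => r i * x + b i) a ∩ Set.Icc (-h) h
          ⊆ {a} := by
        rintro x ⟨⟨w, hw, rfl⟩, _⟩
        simp [orbit_form r b a hfix a w]
      have h1 : Set.ncard (forwardOrbit (fun i : Fin m => fun x : ℝ => r i * x + b i) a ∩
          Set.Icc (-h) h) ≤ 1 := by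
        refine le_trans (Set.ncard_le_ncard hsub (Set.finite_singleton a)) ?_
        simp
      interval_cases hn : (Set.ncard (forwardOrbit (fun i : Fin m => fun x : ℝ => r i * x + b i) a ∩
          Set.Icc (-h) h)) <;> simp
    simp only [key, zero_div]
    exact tendsto_const_nhds
  -- main case
  have hd : 0 < |a - x0| := abs_pos.2 (sub_ne_zero.2 ha)
  set d := |a - x0| with hd_def
  have hne : (Finset.univ : Finset (Fin m)).Nonempty := ⟨⟨0, hm⟩, Finset.mem_univ _⟩
  set c := Finset.inf' Finset.univ hne (fun i => |r i|) with hc_def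
  have hc1 : 1 < c := by
    rw [hc_def, Finset.lt_inf'_iff]
    intro i _
    exact hr i
  have hcr : ∀ i, c ≤ |r i| := fun i => Finset.inf'_le _ (Finset.mem_univ i)
  have hlogc : 0 < Real.log c := Real.log_pos hc1
  set K : ℝ := 2 / Real.log c + |Real.log d| / Real.log c + 2 with hK_def
  have hK2 : 2 ≤ K := by
    have h1 : 0 ≤ 2 / Real.log c := by positivity
    have h2 : 0 ≤ |Real.log d| / Real.log c := by positivity
    rw [hK_def]; linarith
  have hKpos : 0 < K := by linarith
  set h0 : ℝ := max (max (2 + |x0|) (d + 1)) (Real.exp 1) with hh0_def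
  have t1 : Filter.Tendsto (fun h : ℝ => Real.log K / Real.log h) Filter.atTop (nhds 0) :=
    Filter.Tendsto.div_atTop tendsto_const_nhds Real.tendsto_log_atTop
  have t2 : Filter.Tendsto (fun h : ℝ => Real.log (Real.log h) / Real.log h)
      Filter.atTop (nhds 0) :=
    (Real.isLittleO_log_id_atTop.tendsto_div_nhds_zero).comp Real.tendsto_log_atTop
  have hupper : Filter.Tendsto
      (fun h : ℝ => (m : ℝ) * (Real.log K + Real.log (Real.log h)) / Real.log h)
      Filter.atTop (nhds 0) := by
    have h3 := (t1.add t2).const_mul (m : ℝ)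
    simp only [add_zero, mul_zero] at h3
    refine h3.congr (fun h => ?_)
    ring
  refine tendsto_of_tendsto_of_tendsto_of_le_of_le' tendsto_const_nhds hupper ?_ ?_
  · filter_upwards [Filter.eventually_ge_atTop (1 : ℝ)] with h hh
    exact div_nonneg (log_nat_nonneg _) (Real.log_nonneg hh)
  · filter_upwards [Filter.eventually_ge_atTop h0] with h hh
    have hA : 2 + |x0| ≤ h := le_trans (le_trans (le_max_left _ _) (le_max_left _ _)) hh
    have hB : d + 1 ≤ h := le_trans (le_trans (le_max_right _ _) (le_max_left _ _)) hh
    have hC : Real.exp 1 ≤ h := le_trans (le_max_right _ _) hh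
    have hx0 : (0:ℝ) ≤ |x0| := abs_nonneg x0
    have hh2 : (2:ℝ) ≤ h := by linarith
    have hhpos : (0:ℝ) < h := by linarith
    have hlogh1 : 1 ≤ Real.log h := by
      rw [← Real.log_exp 1]
      exact Real.log_le_log (Real.exp_pos 1) hC
    have hloghpos : 0 < Real.log h := lt_of_lt_of_le one_pos hlogh1
    set L := ⌈Real.log ((h + |x0|) / d) / Real.log c⌉₊ with hL_def
    have hlen : ∀ w : List (Fin m),
        w.foldr (fun i y => r i * y + b i) a ∈ Set.Icc (-h) h → w.length ≤ L := by
      intro w hw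
      have hx : |w.foldr (fun i y => r i * y + b i) a| ≤ h := abs_le.2 ⟨hw.1, hw.2⟩
      have hform := orbit_form r b x0 hfix a w
      have h1 : |(w.map r).prod| * d ≤ h + |x0| := by
        have e1 : (w.map r).prod * (a - x0) = w.foldr (fun i y => r i * y + b i) a - x0 := by
          rw [hform]; ring
        have e2 : |(w.map r).prod * (a - x0)| ≤ h + |x0| := by
          rw [e1]
          have := abs_add_le (w.foldr (fun i y => r i * y + b i) a) (-x0)
          rw [← sub_eq_add_neg, abs_neg] at this
          linarith
        rwa [abs_mul] at e2
      have hBle : |(w.map r).prod| ≤ (h + |x0|) / d := (le_div_iff₀ hd).2 h1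
      have h2 : c ^ w.length ≤ (h + |x0|) / d :=
        le_trans (abs_prod_ge r c hc1.le hcr w) hBle
      have h3 : (w.length : ℝ) * Real.log c ≤ Real.log ((h + |x0|) / d) := by
        have := Real.log_le_log (pow_pos (lt_trans one_pos hc1) _) h2
        rwa [Real.log_pow] at this
      have h4 : (w.length : ℝ) ≤ Real.log ((h + |x0|) / d) / Real.log c :=
        (le_div_iff₀ hlogc).2 h3
      exact_mod_cast le_trans h4 (Nat.le_ceil _)
    have hcard := stmt10_card_le r b x0 a hfix h L hlen
    have hlogB : Real.log ((h + |x0|) / d) = Real.log (h + |x0|) - Real.log d :=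
      Real.log_div (by positivity) hd.ne'
    have hlogBnn : 0 ≤ Real.log ((h + |x0|) / d) := by
      refine Real.log_nonneg ?_
      rw [le_div_iff₀ hd]
      linarith
    have hlog2 : Real.log (h + |x0|) ≤ 2 * Real.log h := by
      have hsq : h + |x0| ≤ h ^ 2 := by nlinarith
      calc Real.log (h + |x0|) ≤ Real.log (h ^ 2) := Real.log_le_log (by positivity) hsq
        _ = 2 * Real.log h := by rw [Real.log_pow]; norm_num
    have hLceil : (L : ℝ) < Real.log ((h + |x0|) / d) / Real.log c + 1 :=
      Nat.ceil_lt_add_one (div_nonneg hlogBnn hlogc.le)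
    have hLK : ((L : ℝ) + 1) ≤ K * Real.log h := by
      have step1 : (L : ℝ) + 1 ≤ Real.log ((h + |x0|) / d) / Real.log c + 2 := by linarith
      have step2 : Real.log ((h + |x0|) / d) ≤ 2 * Real.log h + |Real.log d| := by
        rw [hlogB]
        have := neg_abs_le (Real.log d)
        linarith
      have step3 : Real.log ((h + |x0|) / d) / Real.log c
          ≤ (2 * Real.log h + |Real.log d|) / Real.log c := by gcongr
      have step4 : (2 * Real.log h + |Real.log d|) / Real.log c
          = (2 / Real.log c) * Real.log h + |Real.log d| / Real.log c := by ring
      have step5 : |Real.log d| / Real.log c ≤ (|Real.log d| / Real.log c) * Real.log h :=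
        le_mul_of_one_le_right (by positivity) hlogh1
      have step6 : (2 : ℝ) ≤ 2 * Real.log h := by linarith
      have expand : K * Real.log h = (2 / Real.log c) * Real.log h
          + (|Real.log d| / Real.log c) * Real.log h + 2 * Real.log h := by
        rw [hK_def]; ring
      calc (L : ℝ) + 1 ≤ Real.log ((h + |x0|) / d) / Real.log c + 2 := step1
        _ ≤ (2 * Real.log h + |Real.log d|) / Real.log c + 2 := by linarith
        _ = (2 / Real.log c) * Real.log h + |Real.log d| / Real.log c + 2 := by
            rw [step4]
        _ ≤ (2 / Real.log c) * Real.log h + (|Real.log d| / Real.log c) * Real.log h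
            + 2 * Real.log h := by linarith
        _ = K * Real.log h := expand.symm
    have hnum : Real.log (Set.ncard
        (forwardOrbit (fun i : Fin m => fun x : ℝ => r i * x + b i) a ∩ Set.Icc (-h) h))
        ≤ (m : ℝ) * (Real.log K + Real.log (Real.log h)) := by
      have s1 := log_nat_mono hcard
      have s2 : Real.log (((L + 1) ^ m : ℕ) : ℝ) = (m : ℝ) * Real.log ((L : ℝ) + 1) := by
        push_cast
        rw [Real.log_pow]
      have s3 : Real.log ((L : ℝ) + 1) ≤ Real.log (K * Real.log h) :=
        Real.log_le_log (by positivity) hLK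
      have s4 : Real.log (K * Real.log h) = Real.log K + Real.log (Real.log h) :=
        Real.log_mul hKpos.ne' hloghpos.ne'
      calc Real.log (Set.ncard
            (forwardOrbit (fun i : Fin m => fun x : ℝ => r i * x + b i) a ∩ Set.Icc (-h) h))
          ≤ Real.log (((L + 1) ^ m : ℕ) : ℝ) := s1
        _ = (m : ℝ) * Real.log ((L : ℝ) + 1) := s2
        _ ≤ (m : ℝ) * (Real.log K + Real.log (Real.log h)) := by
            rw [← s4]
            exact mul_le_mul_of_nonneg_left s3 (Nat.cast_nonneg m)
    exact (div_le_div_iff_of_pos_right hloghpos).2 hnum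
end
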